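/- Let k ≥ 4, s ∈ {4,…,k}, and let f be a function on {u,v,w,y₄,…,y_k} with f(y_i)=i for all i, such that f extends to a proper k-coloring of the gadget F_{enc,s,k}(u,v,w;y₄,…,y_k). Then f(v), f(w) ∈ {1,2,3}. -/

import Mathlib

/-- `c` is a proper `k`-coloring of `G` with colors in `[k] = {1,…,k}`. -/
def IsProperKColoring {V : Type*} (G : SimpleGraph V) (k : ℕ) (c : V → ℕ) : Prop :=
  (∀ v, c v ∈ Finset.Icc 1 k) ∧ ∀ ⦃x y⦄, G.Adj x y → c x ≠ c y

/-- Index type for the vertices `y₄, …, y_k`. -/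
def Yk (k : ℕ) : Type := {i : ℕ // 4 ≤ i ∧ i ≤ k}

/-- Internal (non-shared) vertices of the pieces of the gadget
`F_{enc,s,k}`.  A pair `(r, i)` denotes the `i`-th internal vertex of the
piece `F_r`; `r = 1` stands for the piece `F₁`, which has internal vertices
`v₁, v₂, w₁, w₂` (indices `0,1,2,3`); the piece `F_s` has internal vertices
`u', w₁, w₂` (indices `0,1,2`); a piece `F_r` with `r ∈ {4,…,k} \ {s}` has
internal vertices `u', v₁, v₂, w₁, w₂` (indices `0,1,2,3,4`). -/
def EncInt (k s : ℕ) : Type :=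
  {p : ℕ × ℕ // (p.1 = 1 ∧ p.2 < 4) ∨
    (4 ≤ p.1 ∧ p.1 ≤ k ∧ ((p.1 = s ∧ p.2 < 3) ∨ (p.1 ≠ s ∧ p.2 < 5)))}

/-- Vertices of `F_{enc,s,k}(u,v,w;y₄,…,y_k)`: the shared vertices `u = 0`,
`v = 1`, `w = 2` and `y₄,…,y_k`, plus the internal vertices of the pieces. -/
def EV (k s : ℕ) : Type := Fin 3 ⊕ Yk k ⊕ EncInt k s

/-- The adjacency (before symmetrization) of the gadget `F_{enc,s,k}`,
obtained by gluing the pieces `F₁, F₄, …, F_k` along `u, v, w, y₄, …, y_k`. -/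
def encRel (k s : ℕ) : EV k s → EV k s → Prop
  | .inl a, .inr (.inl _) => a ≠ 0
  | .inl a, .inr (.inr p) =>
      (p.1.1 = 1 ∧ (a = 0 ∨ (a = 1 ∧ p.1.2 < 2) ∨ (a = 2 ∧ 2 ≤ p.1.2)))
      ∨ (p.1.1 = s ∧ ((a = 0 ∧ p.1.2 = 0) ∨ (a = 1 ∧ p.1.2 = 0) ∨ (a = 2 ∧ p.1.2 ≠ 0)))
      ∨ (4 ≤ p.1.1 ∧ p.1.1 ≠ s ∧ ((a = 0 ∧ p.1.2 = 0) ∨ (a = 1 ∧ (p.1.2 = 1 ∨ p.1.2 = 2))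
          ∨ (a = 2 ∧ (p.1.2 = 3 ∨ p.1.2 = 4))))
  | .inr (.inl j), .inr (.inr p) => ¬(p.1.1 = j.1 ∧ p.1.2 = 0)
  | .inr (.inr p), .inr (.inr q) =>
      p.1.1 = q.1.1 ∧
      ((p.1.1 = 1 ∧ (p.1.2, q.1.2) ∈ ([(0,1),(2,3)] : List (ℕ × ℕ)))
       ∨ (p.1.1 = s ∧ (p.1.2, q.1.2) ∈ ([(0,1),(0,2),(1,2)] : List (ℕ × ℕ)))
       ∨ (4 ≤ p.1.1 ∧ p.1.1 ≠ s ∧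
          (p.1.2, q.1.2) ∈ ([(0,1),(0,2),(0,3),(0,4),(1,2),(3,4)] : List (ℕ × ℕ))))
  | _, _ => False

/-- The gadget `F_{enc,s,k}(u,v,w;y₄,…,y_k)`. -/
def Fenc (k s : ℕ) : SimpleGraph (EV k s) := SimpleGraph.fromRel (encRel k s)

/-- If a function `f` on `{u,v,w,y₄,…,y_k}` with `f(yᵢ) = i` extends to a
proper `k`-coloring of the gadget `F_{enc,s,k}(u,v,w;y₄,…,y_k)`, then
`f v, f w ∈ {1,2,3}`. -/
theorem Fenc_forces_vw_colors (k s : ℕ) (hk : 4 ≤ k) (hs : 4 ≤ s ∧ s ≤ k)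
    (f : EV k s → ℕ)
    (hfu : f (.inl 0) ∈ Finset.Icc 1 k) (hfv : f (.inl 1) ∈ Finset.Icc 1 k)
    (hfw : f (.inl 2) ∈ Finset.Icc 1 k)
    (hfy : ∀ y : Yk k, f (.inr (.inl y)) = y.1)
    (hext : ∃ c : EV k s → ℕ, IsProperKColoring (Fenc k s) k c ∧
        c (.inl 0) = f (.inl 0) ∧ c (.inl 1) = f (.inl 1) ∧ c (.inl 2) = f (.inl 2) ∧
        ∀ y : Yk k, c (.inr (.inl y)) = f (.inr (.inl y))) :
    f (.inl 1) ∈ ({1,2,3} : Set ℕ) ∧ f (.inl 2) ∈ ({1,2,3} : Set ℕ) := by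
  obtain ⟨c, ⟨hmem, hprop⟩, hcu, hcv, hcw, hcy⟩ := hext
  have key : ∀ a : Fin 3, a ≠ 0 → c (.inl a) ∈ ({1,2,3} : Set ℕ) := by
    intro a ha
    by_contra h
    have h1 := Finset.mem_Icc.mp (hmem (.inl a))
    have h4 : 4 ≤ c (.inl a) := by
      simp only [Set.mem_insert_iff, Set.mem_singleton_iff] at h
      omega
    set y : Yk k := ⟨c (.inl a), h4, h1.2⟩ with hy
    have hadj : (Fenc k s).Adj (.inl a) (.inr (.inl y)) := by
      refine (SimpleGraph.fromRel_adj (encRel k s) _ _).mpr ?_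
      exact ⟨Sum.inl_ne_inr, Or.inl ha⟩
    have := hprop hadj
    rw [hcy y, hfy y] at this
    exact this rfl
  rw [← hcv, ← hcw]
  exact ⟨key 1 (by decide), key 2 (by decide)⟩
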